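/- For all integers r ≥ 1, p ≥ 3, and q ≥ 2, one has F_χ(r, p, q) ≤ (p-1)^{⌈r/(q-1)⌉} + 1. Equivalently, every chromatic-(p,q)-coloring of K_n with r colors satisfies n ≤ (p-1)^{⌈r/(q-1)⌉}. -/

import Mathlib

open Finset

/-- The graph of the edges of `K_n` whose color lies in `Q`. -/
def unionGraph {n N : ℕ} (col : Sym2 (Fin n) → Fin N) (Q : Finset (Fin N)) : SimpleGraph (Fin n) :=
  SimpleGraph.fromRel (fun v w => col s(v, w) ∈ Q)

/-- A chromatic-(p,q)-coloring : the union of any `q - 1` color classes has chromatic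
number at most `p - 1`. -/
def chromaticPQ {n N : ℕ} (col : Sym2 (Fin n) → Fin N) (p q : ℕ) : Prop :=
  ∀ Q : Finset (Fin N), Q.card ≤ q - 1 → (unionGraph col Q).Colorable (p - 1)

/-- `Fchi r p q` : the minimum `n` such that every edge-coloring of `K_n` with `r` colors
contains a subgraph of chromatic number at least `p` whose edges receive at most `q - 1`
distinct colors. -/
noncomputable def Fchi (r p q : ℕ) : ℕ :=
  sInf { n : ℕ | ∀ col : Sym2 (Fin n) → Fin r,
    ∃ Q : Finset (Fin r), Q.card ≤ q - 1 ∧ ¬ (unionGraph col Q).Colorable (p - 1) }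

theorem key {n r : ℕ} (p q : ℕ) (hq : 2 ≤ q)
    (col : Sym2 (Fin n) → Fin r) (h : chromaticPQ col p q) :
    n ≤ (p - 1) ^ (Nat.ceil ((r : ℝ) / ((q : ℝ) - 1))) := by
  set t := Nat.ceil ((r : ℝ) / ((q : ℝ) - 1)) with ht
  have hq1 : 0 < q - 1 := by omega
  have hrt : r ≤ t * (q - 1) := by
    have h1 : ((r : ℝ) / ((q : ℝ) - 1)) ≤ t := Nat.le_ceil _
    have hq1' : (0 : ℝ) < (q : ℝ) - 1 := by
      have : (2 : ℝ) ≤ (q : ℝ) := by exact_mod_cast hq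
      linarith
    have h2 := (div_le_iff₀ hq1').mp h1
    have hcast : ((q : ℝ) - 1) = ((q - 1 : ℕ) : ℝ) := by
      push_cast [Nat.cast_sub (by omega : 1 ≤ q)]
      ring
    rw [hcast] at h2
    exact_mod_cast h2
  set Q : Fin t → Finset (Fin r) :=
    fun i => univ.filter (fun c => c.val / (q - 1) = i.val) with hQ
  have hQcard : ∀ i, (Q i).card ≤ q - 1 := by
    intro i
    have hle : (Q i).card ≤ (Finset.range (q - 1)).card := by
      apply Finset.card_le_card_of_injOn (fun c => c.val % (q - 1))
      · intro c _
        simp only [Finset.mem_coe, Finset.mem_range]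
        exact Nat.mod_lt _ hq1
      · intro a ha b hb hab
        simp only [hQ, Finset.mem_coe, Finset.mem_filter, Finset.mem_univ, true_and] at ha hb
        have hab' : a.val % (q - 1) = b.val % (q - 1) := hab
        have hdiv : a.val / (q - 1) = b.val / (q - 1) := by rw [ha, hb]
        apply Fin.ext
        calc a.val = (q - 1) * (a.val / (q - 1)) + a.val % (q - 1) :=
              (Nat.div_add_mod a.val (q - 1)).symm
          _ = (q - 1) * (b.val / (q - 1)) + b.val % (q - 1) := by rw [hdiv, hab']
          _ = b.val := Nat.div_add_mod b.val (q - 1)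
    simpa using hle
  have hcol : ∀ i, ((unionGraph col (Q i)).Colorable (p - 1)) := fun i => h (Q i) (hQcard i)
  let C : ∀ i : Fin t, (unionGraph col (Q i)).Coloring (Fin (p - 1)) := fun i => (hcol i).some
  let Φ : Fin n → (Fin t → Fin (p - 1)) := fun v i => C i v
  have hinj : Function.Injective Φ := by
    intro v w hvw
    by_contra hne
    set c := col s(v, w) with hc
    have hi : c.val / (q - 1) < t := by
      have hlt : c.val < (q - 1) * t := by
        calc c.val < r := c.isLt
        _ ≤ t * (q - 1) := hrt
        _ = (q - 1) * t := Nat.mul_comm _ _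
      exact Nat.div_lt_of_lt_mul hlt
    let i : Fin t := ⟨c.val / (q - 1), hi⟩
    have hadj : (unionGraph col (Q i)).Adj v w := by
      refine ⟨hne, Or.inl ?_⟩
      simp only [hQ, Finset.mem_filter, Finset.mem_univ, true_and]
      rfl
    exact (C i).valid hadj (congrFun hvw i)
  have hcard := Fintype.card_le_of_injective Φ hinj
  simpa using hcard

/-- The product bound: `F_χ(r,p,q) ≤ (p-1)^{⌈r/(q-1)⌉} + 1`; equivalently every
chromatic-(p,q)-coloring of `K_n` with `r` colors has `n ≤ (p-1)^{⌈r/(q-1)⌉}`. -/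
theorem stmt13 (r p q : ℕ) (hr : 1 ≤ r) (hp : 3 ≤ p) (hq : 2 ≤ q) :
    Fchi r p q ≤ (p - 1) ^ (Nat.ceil ((r : ℝ) / ((q : ℝ) - 1))) + 1 ∧
    ∀ (n : ℕ) (col : Sym2 (Fin n) → Fin r), chromaticPQ col p q →
      n ≤ (p - 1) ^ (Nat.ceil ((r : ℝ) / ((q : ℝ) - 1))) := by
  constructor
  · apply Nat.sInf_le
    intro col
    by_contra hcon
    push_neg at hcon
    have hb := key p q hq col hcon
    omega
  · intro n col hcpq
    exact key p q hq col hcpq
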